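/- Let ε ≥ 0, γ ≥ 0, and let (h,α,ϑ) be a minimizer of C in 𝓐. Set r_i = h_i·D²m(α+ϑ_i) for i=1,…,n. If, for every i, μ = 1 is not an eigenvalue of the Sturm–Liouville problem −u'' + (r_i⁻ + 1)u = μ(r_i⁺ + 1)u in (0,1), u(0)=0, u'(1)=0, then (h,α,ϑ) is a regular point of 𝓐, i.e. the Fréchet differential DG(h,α,ϑ) : 𝓗 → (H^1_{0L}(I)ⁿ)' is surjective. -/

import Mathlib

open MeasureTheory Set

noncomputable def edot (p q : ℝ × ℝ) : ℝ := p.1 * q.1 + p.2 * q.2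
noncomputable def enorm2 (p : ℝ × ℝ) : ℝ := Real.sqrt (p.1 ^ 2 + p.2 ^ 2)
noncomputable def Dmvec (v : ℝ) : ℝ × ℝ := (-Real.sin v, Real.cos v)
noncomputable def D2mvec (v : ℝ) : ℝ × ℝ := (-Real.cos v, -Real.sin v)

noncomputable def mu01 : Measure ℝ := volume.restrict (Ioo 0 1)

/-- `H^1_{0L}(I)` modelled isometrically by the `L²(I)` space of derivatives. -/
noncomputable abbrev E := Lp ℝ 2 mu01

noncomputable def U (g : E) : ℝ → ℝ := fun t => ∫ s in Ioc 0 t, (g : ℝ → ℝ) s ∂mu01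


instance : IsProbabilityMeasure mu01 := ⟨by simp [mu01, Real.volume_Ioo]⟩
noncomputable def indF (s : ℝ) : ℝ → ℝ := (Ioc (0:ℝ) s).indicator (fun _ => (1:ℝ))
lemma memℒp_indF (s : ℝ) : MemLp (indF s) 2 mu01 :=
  memLp_indicator_const 2 measurableSet_Ioc 1 (Or.inr (measure_ne_top _ _))
noncomputable def chi (s : ℝ) : E := (memℒp_indF s).toLp (indF s)
lemma inner_eq_integral (f g : E) :
    (inner ℝ f g : ℝ) = ∫ s, (f : ℝ → ℝ) s * (g : ℝ → ℝ) s ∂mu01 := by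
  rw [L2.inner_def]; simp [RCLike.inner_apply, conj_trivial, mul_comm]
lemma chi_ae (s : ℝ) : (chi s : ℝ → ℝ) =ᵐ[mu01] indF s := (memℒp_indF s).coeFn_toLp
lemma norm_sq_eq (f : E) : ‖f‖ ^ 2 = ∫ s, (f : ℝ → ℝ) s * (f : ℝ → ℝ) s ∂mu01 := by
  rw [← real_inner_self_eq_norm_sq, inner_eq_integral]

lemma indF_bound (s t x : ℝ) :
    (indF s x - indF t x) * (indF s x - indF t x)
      ≤ (Ioc (min s t) (max s t)).indicator (fun _ => (1:ℝ)) x := by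
  have hnn : (0:ℝ) ≤ (Ioc (min s t) (max s t)).indicator (fun _ => (1:ℝ)) x :=
    indicator_nonneg (fun _ _ => zero_le_one) x
  by_cases hs : x ∈ Ioc (0:ℝ) s <;> by_cases ht : x ∈ Ioc (0:ℝ) t
  · simpa [indF, indicator_of_mem, hs, ht] using hnn
  · have hx : x ∈ Ioc (min s t) (max s t) := by
      simp only [mem_Ioc, not_and, not_le] at hs ht ⊢
      exact ⟨lt_of_le_of_lt (min_le_right _ _) (ht hs.1), le_trans hs.2 (le_max_left _ _)⟩
    simp [indF, indicator_of_mem, indicator_of_notMem, hs, ht, hx]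
  · have hx : x ∈ Ioc (min s t) (max s t) := by
      simp only [mem_Ioc, not_and, not_le] at hs ht ⊢
      exact ⟨lt_of_le_of_lt (min_le_left _ _) (hs ht.1), le_trans ht.2 (le_max_right _ _)⟩
    simp [indF, indicator_of_mem, indicator_of_notMem, hs, ht, hx]
  · simpa [indF, indicator_of_notMem, hs, ht] using hnn

lemma norm_chi_sub_sq (s t : ℝ) : ‖chi s - chi t‖ ^ 2 ≤ |s - t| := by
  have key : ‖chi s - chi t‖ ^ 2
      = ∫ x, (indF s x - indF t x) * (indF s x - indF t x) ∂mu01 := by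
    rw [norm_sq_eq]
    apply integral_congr_ae
    filter_upwards [Lp.coeFn_sub (chi s) (chi t), chi_ae s, chi_ae t] with x h1 h2 h3
    rw [h1]; simp [h2, h3]
  have hint1 : Integrable (fun x => (indF s x - indF t x) * (indF s x - indF t x)) mu01 := by
    refine (L2.integrable_inner (𝕜 := ℝ) (chi s - chi t) (chi s - chi t)).congr ?_
    filter_upwards [AEEqFun.coeFn_sub ((chi s : ℝ →ₘ[mu01] ℝ)) ((chi t : ℝ →ₘ[mu01] ℝ)),
      chi_ae s, chi_ae t, Lp.coeFn_sub (chi s) (chi t)] with x h1 h2 h3 h4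
    simp only [RCLike.inner_apply, conj_trivial, h1, h4, Pi.sub_apply, h2, h3]
  have hint2 : Integrable ((Ioc (min s t) (max s t)).indicator (fun _ => (1:ℝ))) mu01 :=
    (integrable_const (1:ℝ)).indicator measurableSet_Ioc
  rw [key]
  calc (∫ x, (indF s x - indF t x) * (indF s x - indF t x) ∂mu01)
      ≤ ∫ x, (Ioc (min s t) (max s t)).indicator (fun _ => (1:ℝ)) x ∂mu01 :=
        integral_mono hint1 hint2 (fun x => indF_bound s t x)
    _ = (mu01 (Ioc (min s t) (max s t))).toReal • (1:ℝ) :=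
        integral_indicator_const _ measurableSet_Ioc
    _ ≤ (volume (Ioc (min s t) (max s t))).toReal := by
        rw [smul_eq_mul, mul_one]
        refine ENNReal.toReal_mono (by simp [Real.volume_Ioc]) ?_
        exact Measure.restrict_le_self _
    _ = |s - t| := by
        rw [Real.volume_Ioc, ENNReal.toReal_ofReal (by simp [min_le_max])]
        rw [max_sub_min_eq_abs, abs_sub_comm]

lemma norm_chi_sub_le (s t : ℝ) : ‖chi s - chi t‖ ≤ Real.sqrt |s - t| :=
  (Real.le_sqrt (norm_nonneg _) (abs_nonneg _)).2 (norm_chi_sub_sq s t)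

lemma norm_chi_le (s : ℝ) : ‖chi s‖ ≤ 1 := by
  have h2 : ‖chi s‖ ^ 2 ≤ 1 := by
    have key : ‖chi s‖ ^ 2 = ∫ x, indF s x * indF s x ∂mu01 := by
      rw [norm_sq_eq]
      apply integral_congr_ae
      filter_upwards [chi_ae s] with x hx; rw [hx]
    have hint1 : Integrable (fun x => indF s x * indF s x) mu01 := by
      refine (L2.integrable_inner (𝕜 := ℝ) (chi s) (chi s)).congr ?_
      filter_upwards [chi_ae s] with x hx
      simp [RCLike.inner_apply, conj_trivial, hx]
      ring
    rw [key]
    calc (∫ x, indF s x * indF s x ∂mu01) ≤ ∫ _x, (1:ℝ) ∂mu01 := by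
          refine integral_mono hint1 (integrable_const _) (fun x => ?_)
          by_cases h : x ∈ Ioc (0:ℝ) s <;> simp [indF, indicator, h]
      _ = 1 := by simp
  nlinarith [norm_nonneg (chi s)]

lemma U_eq_inner (w : E) (s : ℝ) : U w s = (inner ℝ (chi s) w : ℝ) := by
  rw [inner_eq_integral, U]
  rw [← integral_indicator (measurableSet_Ioc (a := (0:ℝ)) (b := s))]
  refine integral_congr_ae ?_
  filter_upwards [(memℒp_indF s).coeFn_toLp] with t ht
  show (Ioc (0:ℝ) s).indicator (⇑w) t = _
  rw [show chi s = (memℒp_indF s).toLp (indF s) from rfl, ht]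
  by_cases h : t ∈ Ioc (0:ℝ) s <;> simp [indF, indicator, h]

lemma U_add (w z : E) (s : ℝ) : U (w + z) s = U w s + U z s := by
  simp [U_eq_inner, inner_add_right]

lemma U_sub (w z : E) (s : ℝ) : U (w - z) s = U w s - U z s := by
  simp [U_eq_inner, inner_sub_right]

lemma U_smul (c : ℝ) (w : E) (s : ℝ) : U (c • w) s = c * U w s := by
  simp [U_eq_inner, inner_smul_right]

lemma U_zero (s : ℝ) : U (0 : E) s = 0 := by
  simp [U_eq_inner]

lemma U_bound (w : E) (s : ℝ) : |U w s| ≤ ‖w‖ := by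
  rw [U_eq_inner]
  calc |(inner ℝ (chi s) w : ℝ)| ≤ ‖chi s‖ * ‖w‖ := abs_real_inner_le_norm _ _
    _ ≤ 1 * ‖w‖ := by
        exact mul_le_mul_of_nonneg_right (norm_chi_le s) (norm_nonneg _)
    _ = ‖w‖ := one_mul _

lemma U_holder (w : E) (s t : ℝ) : |U w s - U w t| ≤ ‖w‖ * Real.sqrt |s - t| := by
  rw [U_eq_inner, U_eq_inner, ← inner_sub_left]
  calc |(inner ℝ (chi s - chi t) w : ℝ)| ≤ ‖chi s - chi t‖ * ‖w‖ := abs_real_inner_le_norm _ _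
    _ ≤ Real.sqrt |s - t| * ‖w‖ :=
        mul_le_mul_of_nonneg_right (norm_chi_sub_le s t) (norm_nonneg _)
    _ = ‖w‖ * Real.sqrt |s - t| := mul_comm _ _

lemma U_continuous (w : E) : Continuous (U w) := by
  rw [Metric.continuous_iff]
  intro b ε hε
  refine ⟨(ε / (‖w‖ + 1)) ^ 2, by positivity, fun a ha => ?_⟩
  have hw1 : (0:ℝ) < ‖w‖ + 1 := by positivity
  calc dist (U w a) (U w b) = |U w a - U w b| := Real.dist_eq _ _
    _ ≤ ‖w‖ * Real.sqrt |a - b| := U_holder w a b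
    _ ≤ ‖w‖ * Real.sqrt (dist a b) := by rw [Real.dist_eq]
    _ < ‖w‖ * (ε / (‖w‖ + 1)) + (ε / (‖w‖ + 1)) := by
        have h1 : Real.sqrt (dist a b) < ε / (‖w‖ + 1) := by
          have := Real.sqrt_lt_sqrt dist_nonneg ha
          rwa [Real.sqrt_sq (by positivity)] at this
        nlinarith [norm_nonneg w, Real.sqrt_nonneg (dist a b), h1]
    _ ≤ ε := by
        rw [div_eq_inv_mul, ← add_one_mul]
        rw [mul_inv_cancel_left₀ (ne_of_gt hw1)]

lemma cont_integrable {f : ℝ → ℝ} (hf : Continuous f) : Integrable f mu01 :=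
  (hf.integrableOn_Icc (a := 0) (b := 1)).mono_set Ioo_subset_Icc_self

section Operator

variable (r : ℝ → ℝ)

lemma intBil (hr : Continuous r) (w z : E) :
    Integrable (fun s => r s * U w s * U z s) mu01 :=
  cont_integrable ((hr.mul (U_continuous w)).mul (U_continuous z))

lemma Bil_bound (Cr : ℝ) (hCr : ∀ s, |r s| ≤ Cr) (w z : E) :
    ‖∫ s, r s * U w s * U z s ∂mu01‖ ≤ Cr * ‖w‖ * ‖z‖ := by
  have h0 : (0:ℝ) ≤ Cr := le_trans (abs_nonneg _) (hCr 0)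
  have h := norm_integral_le_of_norm_le_const (μ := mu01)
      (C := Cr * ‖w‖ * ‖z‖) (f := fun s => r s * U w s * U z s)
      (Filter.Eventually.of_forall fun s => by
        calc ‖r s * U w s * U z s‖ = |r s| * |U w s| * |U z s| := by
              rw [Real.norm_eq_abs, abs_mul, abs_mul]
          _ ≤ Cr * ‖w‖ * ‖z‖ := by
              have := hCr s; have := U_bound w s; have := U_bound z s
              gcongr <;> first | assumption | positivity)
  simpa [measure_univ] using h

variable (hr : Continuous r) (Cr : ℝ) (hCr : ∀ s, |r s| ≤ Cr)

noncomputable def dualF (w : E) : E →L[ℝ] ℝ :=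
  LinearMap.mkContinuous
    { toFun := fun z => ∫ s, r s * U w s * U z s ∂mu01
      map_add' := fun z z' => by
        simp only [U_add, mul_add]
        exact integral_add (intBil r hr w z) (intBil r hr w z')
      map_smul' := fun c z => by
        simp only [U_smul, RingHom.id_apply, smul_eq_mul]
        rw [← integral_const_mul]
        congr 1; funext s; ring }
    (Cr * ‖w‖)
    (fun z => by
      simpa [mul_assoc] using Bil_bound r Cr hCr w z)

lemma dualF_apply (w z : E) : dualF r hr Cr hCr w z = ∫ s, r s * U w s * U z s ∂mu01 := rfl

noncomputable def Kop : E →L[ℝ] E :=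
  LinearMap.mkContinuous
    { toFun := fun w => (InnerProductSpace.toDual ℝ E).symm (dualF r hr Cr hCr w)
      map_add' := fun w w' => by
        apply ext_inner_right ℝ
        intro z
        rw [InnerProductSpace.toDual_symm_apply, inner_add_left,
          InnerProductSpace.toDual_symm_apply, InnerProductSpace.toDual_symm_apply,
          dualF_apply, dualF_apply, dualF_apply]
        simp only [U_add, add_mul, mul_add]
        exact integral_add (intBil r hr w z) (intBil r hr w' z)
      map_smul' := fun c w => by
        apply ext_inner_right ℝ
        intro z
        rw [RingHom.id_apply, InnerProductSpace.toDual_symm_apply, real_inner_smul_left,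
          InnerProductSpace.toDual_symm_apply, dualF_apply, dualF_apply]
        simp only [U_smul]
        rw [← integral_const_mul]
        congr 1; funext s; ring }
    Cr
    (fun w => by
      have h0 : (0:ℝ) ≤ Cr := le_trans (abs_nonneg _) (hCr 0)
      calc ‖(InnerProductSpace.toDual ℝ E).symm (dualF r hr Cr hCr w)‖
          = ‖dualF r hr Cr hCr w‖ := LinearIsometryEquiv.norm_map _ _
        _ ≤ Cr * ‖w‖ := LinearMap.mkContinuous_norm_le _ (by positivity) _)

lemma inner_K (w z : E) :
    (inner ℝ (Kop r hr Cr hCr w) z : ℝ) = ∫ s, r s * U w s * U z s ∂mu01 := by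
  have : Kop r hr Cr hCr w = (InnerProductSpace.toDual ℝ E).symm (dualF r hr Cr hCr w) := rfl
  rw [this, InnerProductSpace.toDual_symm_apply, dualF_apply]

noncomputable def Aop : E →L[ℝ] E := ContinuousLinearMap.id ℝ E - Kop r hr Cr hCr

lemma Aop_apply (w : E) : Aop r hr Cr hCr w = w - Kop r hr Cr hCr w := rfl

lemma inner_A (w z : E) :
    (inner ℝ (Aop r hr Cr hCr w) z : ℝ)
      = (inner ℝ w z : ℝ) - ∫ s, r s * U w s * U z s ∂mu01 := by
  rw [Aop_apply, inner_sub_left, inner_K]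

lemma Bil_symm (w z : E) :
    (∫ s, r s * U w s * U z s ∂mu01) = ∫ s, r s * U z s * U w s ∂mu01 := by
  congr 1; funext s; ring

lemma K_bound_of (w : E) (M : ℝ) (hM : 0 ≤ M)
    (h : ∀ s ∈ Ioo (0:ℝ) 1, |U w s| ≤ M) : ‖Kop r hr Cr hCr w‖ ≤ Cr * M := by
  have h0 : (0:ℝ) ≤ Cr := le_trans (abs_nonneg _) (hCr 0)
  set q := Kop r hr Cr hCr w with hq
  have hae : ∀ᵐ s ∂mu01, s ∈ Ioo (0:ℝ) 1 := ae_restrict_mem measurableSet_Ioo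
  have key : ‖q‖ ^ 2 ≤ Cr * M * ‖q‖ := by
    have hinner : (inner ℝ q q : ℝ) = ∫ s, r s * U w s * U q s ∂mu01 :=
      inner_K r hr Cr hCr w q
    rw [← real_inner_self_eq_norm_sq, hinner]
    have hb := norm_integral_le_of_norm_le_const (μ := mu01) (C := Cr * M * ‖q‖)
      (f := fun s => r s * U w s * U q s) (by
        filter_upwards [hae] with s hs
        calc ‖r s * U w s * U q s‖ = |r s| * |U w s| * |U q s| := by
              rw [Real.norm_eq_abs, abs_mul, abs_mul]
          _ ≤ Cr * M * ‖q‖ := by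
              have h1 := hCr s; have h2 := h s hs; have h3 := U_bound q s
              gcongr <;> first | assumption | positivity)
    simp only [probReal_univ, mul_one] at hb
    exact le_trans (le_abs_self _) hb
  rcases eq_or_lt_of_le (norm_nonneg q) with h0' | hpos
  · rw [← h0']; positivity
  · nlinarith [key, hpos]

end Operator

section Fredholm

variable (r : ℝ → ℝ) (hr : Continuous r) (Cr : ℝ) (hCr : ∀ s, |r s| ≤ Cr)

include hr hCr in
lemma bounded_below
    (hinj : ∀ g : E, (∀ w : E, (inner ℝ g w : ℝ) = ∫ s, r s * U g s * U w s ∂mu01) → g = 0) :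
    ∃ c > 0, ∀ g : E, c * ‖g‖ ≤ ‖Aop r hr Cr hCr g‖ := by
  have h0 : (0:ℝ) ≤ Cr := le_trans (abs_nonneg _) (hCr 0)
  by_contra hc
  push_neg at hc
  have hseq : ∀ n : ℕ, ∃ v : E, ‖v‖ = 1 ∧ ‖Aop r hr Cr hCr v‖ < 1 / ((n:ℝ) + 1) := by
    intro n
    obtain ⟨g, hg⟩ := hc (1 / ((n:ℝ) + 1)) (by positivity)
    have hg0 : g ≠ 0 := by
      rintro rfl
      simp only [map_zero, norm_zero, mul_zero] at hg
      exact lt_irrefl _ hg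
    have hgpos : (0:ℝ) < ‖g‖ := norm_pos_iff.2 hg0
    refine ⟨‖g‖⁻¹ • g, norm_smul_inv_norm (𝕜 := ℝ) hg0, ?_⟩
    calc ‖Aop r hr Cr hCr (‖g‖⁻¹ • g)‖ = ‖g‖⁻¹ * ‖Aop r hr Cr hCr g‖ := by
          rw [_root_.map_smul, norm_smul, Real.norm_eq_abs, abs_inv, abs_norm]
      _ < ‖g‖⁻¹ * (1 / ((n:ℝ) + 1) * ‖g‖) :=
          mul_lt_mul_of_pos_left hg (inv_pos.2 hgpos)
      _ = 1 / ((n:ℝ) + 1) := by field_simp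
  choose u hu1 hu2 using hseq
  -- bundle U (u n) as bounded continuous functions on [0,1]
  set X := (Icc (0:ℝ) 1) with hX
  have hcompX : IsCompact X := isCompact_Icc
  haveI : CompactSpace X := isCompact_iff_compactSpace.1 hcompX
  set F : ℕ → BoundedContinuousFunction X ℝ := fun n =>
    BoundedContinuousFunction.ofNormedAddCommGroup (fun t => U (u n) t.1)
      ((U_continuous (u n)).comp continuous_subtype_val) 1
      (fun t => by rw [Real.norm_eq_abs]; simpa [hu1 n] using U_bound (u n) t.1) with hF
  have hFapply : ∀ n (t : X), F n t = U (u n) t.1 := fun n t => rfl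
  set SetA : Set (BoundedContinuousFunction X ℝ) :=
    {f | (∀ a b : X, dist (f a) (f b) ≤ Real.sqrt (dist a b)) ∧ ∀ a : X, f a ∈ Icc (-1:ℝ) 1}
    with hSetA
  have hFA : ∀ n, F n ∈ SetA := by
    intro n
    constructor
    · intro a b
      rw [Real.dist_eq, hFapply, hFapply, Subtype.dist_eq, Real.dist_eq]
      simpa [hu1 n] using U_holder (u n) a.1 b.1
    · intro a
      rw [hFapply]
      have := U_bound (u n) a.1
      rw [hu1 n] at this
      exact abs_le.1 this
  have equicont : Equicontinuous fun (f : SetA) => ⇑(f : BoundedContinuousFunction X ℝ) := by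
    apply UniformEquicontinuous.equicontinuous
    rw [Metric.uniformEquicontinuous_iff]
    intro ε hε
    refine ⟨ε ^ 2, by positivity, fun a b hab i => lt_of_le_of_lt (i.2.1 a b) ?_⟩
    have := Real.sqrt_lt_sqrt dist_nonneg hab
    rwa [Real.sqrt_sq hε.le] at this
  have hcomp : IsCompact (closure SetA) :=
    BoundedContinuousFunction.arzela_ascoli (Icc (-1:ℝ) 1) isCompact_Icc SetA
      (fun f x hf => hf.2 x) equicont
  obtain ⟨L, -, φ, hφmono, hφconv⟩ :=
    hcomp.tendsto_subseq (x := F) (fun n => subset_closure (hFA n))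
  have hcauchyF : CauchySeq (F ∘ φ) := hφconv.cauchySeq
  have hKcauchy : CauchySeq (fun k => Kop r hr Cr hCr (u (φ k))) := by
    rw [Metric.cauchySeq_iff]
    intro ε hε
    obtain ⟨N, hN⟩ := Metric.cauchySeq_iff.1 hcauchyF (ε / (Cr + 1)) (by positivity)
    refine ⟨N, fun m hm k hk => ?_⟩
    have hdist : dist (F (φ m)) (F (φ k)) < ε / (Cr + 1) := hN m hm k hk
    have hKb : ‖Kop r hr Cr hCr (u (φ m) - u (φ k))‖
        ≤ Cr * dist (F (φ m)) (F (φ k)) := by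
      refine K_bound_of r hr Cr hCr _ _ dist_nonneg (fun s hs => ?_)
      have hsX : s ∈ X := Ioo_subset_Icc_self hs
      rw [U_sub]
      have := BoundedContinuousFunction.dist_coe_le_dist (f := F (φ m)) (g := F (φ k)) ⟨s, hsX⟩
      rw [Real.dist_eq] at this
      simpa [hFapply] using this
    calc dist (Kop r hr Cr hCr (u (φ m))) (Kop r hr Cr hCr (u (φ k)))
        = ‖Kop r hr Cr hCr (u (φ m) - u (φ k))‖ := by rw [dist_eq_norm, ← map_sub]
      _ ≤ Cr * dist (F (φ m)) (F (φ k)) := hKb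
      _ ≤ Cr * (ε / (Cr + 1)) := mul_le_mul_of_nonneg_left hdist.le h0
      _ < (Cr + 1) * (ε / (Cr + 1)) := mul_lt_mul_of_pos_right (lt_add_one Cr) (by positivity)
      _ = ε := mul_div_cancel₀ _ (by positivity)
  obtain ⟨q, hq⟩ := cauchySeq_tendsto_of_complete hKcauchy
  have hA0 : Filter.Tendsto (fun k => Aop r hr Cr hCr (u (φ k))) Filter.atTop (nhds 0) := by
    refine squeeze_zero_norm (fun k => ?_) tendsto_one_div_add_atTop_nhds_zero_nat
    refine le_trans (hu2 (φ k)).le (one_div_le_one_div_of_le (by positivity) ?_)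
    have hk : k ≤ φ k := hφmono.le_apply
    have := (Nat.cast_le (α := ℝ)).2 hk; linarith
  have htend : Filter.Tendsto (fun k => u (φ k)) Filter.atTop (nhds q) := by
    have h3 : Filter.Tendsto (fun k => Aop r hr Cr hCr (u (φ k)) + Kop r hr Cr hCr (u (φ k)))
        Filter.atTop (nhds q) := by
      have h3' := hA0.add hq
      rwa [zero_add] at h3'
    exact h3.congr (fun k => by rw [Aop_apply, sub_add_cancel])
  have hq1 : ‖q‖ = 1 := by
    have h1 := htend.norm
    simp only [hu1] at h1
    exact tendsto_nhds_unique h1 tendsto_const_nhds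
  have hAq : Aop r hr Cr hCr q = 0 := by
    have h2 : Filter.Tendsto (fun k => Aop r hr Cr hCr (u (φ k))) Filter.atTop
        (nhds (Aop r hr Cr hCr q)) :=
      ((Aop r hr Cr hCr).continuous.tendsto q).comp htend
    exact tendsto_nhds_unique h2 hA0
  have hq0 : q = 0 := by
    refine hinj q (fun w => ?_)
    have := inner_A r hr Cr hCr q w
    rw [hAq, inner_zero_left] at this
    linarith
  rw [hq0, norm_zero] at hq1
  norm_num at hq1

include hr hCr in
lemma solve
    (hinj : ∀ g : E, (∀ w : E, (inner ℝ g w : ℝ) = ∫ s, r s * U g s * U w s ∂mu01) → g = 0)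
    (T : E →L[ℝ] ℝ) :
    ∃ g : E, ∀ w : E, (∫ s, (g : ℝ → ℝ) s * (w : ℝ → ℝ) s ∂mu01)
      - (∫ s, r s * U g s * U w s ∂mu01) = T w := by
  obtain ⟨c, hc, hbb⟩ := bounded_below r hr Cr hCr hinj
  set A := Aop r hr Cr hCr with hA
  have hanti : AntilipschitzWith (Real.toNNReal c)⁻¹ ⇑A := by
    refine A.antilipschitz_of_bound (fun x => ?_)
    rw [NNReal.coe_inv, Real.coe_toNNReal c hc.le]
    calc ‖x‖ = c⁻¹ * (c * ‖x‖) := by field_simp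
      _ ≤ c⁻¹ * ‖A x‖ := mul_le_mul_of_nonneg_left (hbb x) (inv_nonneg.2 hc.le)
  have hclosed : IsClosed (Set.range ⇑A) := hanti.isClosed_range A.uniformContinuous
  set R : Submodule ℝ E := LinearMap.range (A : E →ₗ[ℝ] E) with hR
  have hRclosed : IsClosed (R : Set E) := by
    have hset : (R : Set E) = Set.range ⇑A := by
      ext y
      simp [hR, LinearMap.mem_range, Set.mem_range]
    rw [hset]; exact hclosed
  haveI hcompl : CompleteSpace R := hRclosed.completeSpace_coe
  have hob : Rᗮ = ⊥ := by
    rw [Submodule.eq_bot_iff]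
    intro w hw
    have hmem : ∀ z : E, (inner ℝ (A z) w : ℝ) = 0 := fun z =>
      (Submodule.mem_orthogonal R w).1 hw (A z) (LinearMap.mem_range_self _ z)
    have hAw : A w = 0 := by
      apply ext_inner_right ℝ
      intro z
      rw [inner_zero_left]
      have h1 := hmem z
      have h2 := inner_A r hr Cr hCr z w
      have h3 := Bil_symm r w z
      have h4 := inner_A r hr Cr hCr w z
      have h5 : (inner ℝ w z : ℝ) = (inner ℝ z w : ℝ) := real_inner_comm _ _
      rw [← hA] at h2 h4
      rw [h4]
      linarith
    refine hinj w (fun z => ?_)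
    have h6 := inner_A r hr Cr hCr w z
    rw [← hA, hAw, inner_zero_left] at h6
    linarith
  have htop : R = ⊤ := Submodule.orthogonal_eq_bot_iff.1 hob
  have hfR : (InnerProductSpace.toDual ℝ E).symm T ∈ R := htop.symm ▸ Submodule.mem_top
  obtain ⟨g, hg⟩ := hfR
  refine ⟨g, fun w => ?_⟩
  have h1 : (inner ℝ (A g) w : ℝ) = T w := by
    rw [show A g = (InnerProductSpace.toDual ℝ E).symm T from hg]
    exact InnerProductSpace.toDual_symm_apply
  calc (∫ s, (g : ℝ → ℝ) s * (w : ℝ → ℝ) s ∂mu01) - (∫ s, r s * U g s * U w s ∂mu01)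
      = (inner ℝ g w : ℝ) - ∫ s, r s * U g s * U w s ∂mu01 := by rw [inner_eq_integral]
    _ = (inner ℝ (A g) w : ℝ) := (inner_A r hr Cr hCr g w).symm
    _ = T w := h1

end Fredholm

lemma hinj_of_not_eigen (r : ℝ → ℝ) (hr : Continuous r)
    (h : ¬ (∃ g : E, g ≠ 0 ∧ ∀ w : E,
      (∫ s, (g : ℝ → ℝ) s * (w : ℝ → ℝ) s ∂mu01)
        + (∫ s, (max (-(r s)) 0 + 1) * U g s * U w s ∂mu01)
        = 1 * ∫ s, (max (r s) 0 + 1) * U g s * U w s ∂mu01)) :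
    ∀ g : E, (∀ w : E, (inner ℝ g w : ℝ) = ∫ s, r s * U g s * U w s ∂mu01) → g = 0 := by
  intro g hg
  by_contra hg0
  apply h
  refine ⟨g, hg0, fun w => ?_⟩
  have h1 : (∫ s, (g : ℝ → ℝ) s * (w : ℝ → ℝ) s ∂mu01)
      = ∫ s, r s * U g s * U w s ∂mu01 := by
    rw [← inner_eq_integral]; exact hg w
  rw [one_mul, h1]
  have int1 : Integrable (fun s => r s * U g s * U w s) mu01 := intBil r hr g w
  have int2 : Integrable (fun s => (max (-(r s)) 0 + 1) * U g s * U w s) mu01 :=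
    intBil _ ((hr.neg.max continuous_const).add continuous_const) g w
  rw [← integral_add int1 int2]
  congr 1; funext s
  have hmax : max (r s) 0 - max (-(r s)) 0 = r s := by
    simpa using max_zero_sub_max_neg_zero_eq_self (r s)
  have h2 : max (r s) 0 = r s + max (-(r s)) 0 := by linarith
  rw [h2]; ring

/-- The admissible space `𝓗 = ℝ^{2n} × H^1_{0L}(I) × H^1_{0L}(I)ⁿ`. -/
noncomputable abbrev Hn (n : ℕ) := (Fin n → ℝ × ℝ) × E × (Fin n → E)

/-- Weak solution of the state equation. -/
def IsStateSol (p : ℝ × ℝ) (a g : E) : Prop :=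
  ∀ w : E, (∫ s, (g : ℝ → ℝ) s * (w : ℝ → ℝ) s ∂mu01)
    - (∫ s, edot p (Dmvec (U a s + U g s)) * U w s ∂mu01) = 0

/-- The admissible set `𝓐`. -/
def Admissible {n : ℕ} (x : Hn n) : Prop := ∀ i, IsStateSol (x.1 i) x.2.1 (x.2.2 i)

/-- The cost functional. -/
noncomputable def cost {n : ℕ} (tb : Fin n → ℝ → ℝ) (ε γ : ℝ) (x : Hn n) : ℝ :=
  (1 / 2) * ∑ i, (∫ s, (U (x.2.2 i) s - tb i s) ^ 2 ∂mu01)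
    + (ε / 2) * (∫ s, ((x.2.1 : ℝ → ℝ) s) ^ 2 ∂mu01)
    + (γ / 2) * ∑ i, (enorm2 (x.1 i)) ^ 2

/-- `⟨DG(h,α,ϑ)(k,β,ι), u⟩`, the Fréchet differential of the constraint mapping. -/
noncomputable def dgFormula {n : ℕ} (x y : Hn n) (u : Fin n → E) : ℝ :=
  ∑ i, (-(∫ s, edot (y.1 i) (Dmvec (U x.2.1 s + U (x.2.2 i) s)) * U (u i) s ∂mu01))
    + ∑ i, ((∫ s, (y.2.2 i : ℝ → ℝ) s * (u i : ℝ → ℝ) s ∂mu01)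
      - ∫ s, edot (x.1 i) (D2mvec (U x.2.1 s + U (x.2.2 i) s))
          * (U (y.2.2 i) s + U y.2.1 s) * U (u i) s ∂mu01)

/-- `μ` is an eigenvalue of the Sturm–Liouville problem
`-u'' + q u = μ r u`, `u(0)=0`, `u'(1)=0` (in the weak sense). -/
def IsEigen (q r : ℝ → ℝ) (μ : ℝ) : Prop :=
  ∃ g : E, g ≠ 0 ∧ ∀ w : E,
    (∫ s, (g : ℝ → ℝ) s * (w : ℝ → ℝ) s ∂mu01)
      + (∫ s, q s * U g s * U w s ∂mu01)
      = μ * ∫ s, r s * U g s * U w s ∂mu01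

/-- Theorem `lagmul2` (i): if `(h,α,ϑ)` is a minimizer of `C` in `𝓐`
and, for each `i`, `μ = 1` is not an eigenvalue of
`-u'' + (rᵢ⁻+1)u = μ(rᵢ⁺+1)u`, `u(0)=0`, `u'(1)=0`, with
`rᵢ = hᵢ·D²m(α+ϑᵢ)`, then `(h,α,ϑ)` is a regular point of `𝓐`:
the differential `DG(h,α,ϑ) : 𝓗 → (H^1_{0L}(I)ⁿ)'` is surjective. -/
theorem minimizer_regular_point (n : ℕ) (ε γ : ℝ) (hε : 0 ≤ ε) (hγ : 0 ≤ γ)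
    (tb : Fin n → ℝ → ℝ) (htb : ∀ i, MemLp (tb i) 2 mu01)
    (x : Hn n) (hadm : Admissible x)
    (hmin : ∀ y : Hn n, Admissible y → cost tb ε γ x ≤ cost tb ε γ y)
    (heig : ∀ i, ¬ IsEigen
      (fun s => max (-(edot (x.1 i) (D2mvec (U x.2.1 s + U (x.2.2 i) s)))) 0 + 1)
      (fun s => max (edot (x.1 i) (D2mvec (U x.2.1 s + U (x.2.2 i) s))) 0 + 1) 1) :
    ∀ T : (Fin n → E) →L[ℝ] ℝ, ∃ y : Hn n, ∀ u : Fin n → E, dgFormula x y u = T u := by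
  intro T
  classical
  -- the potentials rᵢ
  have hcont : ∀ i, Continuous
      (fun s => edot (x.1 i) (D2mvec (U x.2.1 s + U (x.2.2 i) s))) := by
    intro i
    have hu : Continuous fun s => U x.2.1 s + U (x.2.2 i) s :=
      (U_continuous _).add (U_continuous _)
    simp only [edot, D2mvec]
    exact (continuous_const.mul (Real.continuous_cos.comp hu).neg).add
      (continuous_const.mul (Real.continuous_sin.comp hu).neg)
  have hbound : ∀ i s, |edot (x.1 i) (D2mvec (U x.2.1 s + U (x.2.2 i) s))|
      ≤ |(x.1 i).1| + |(x.1 i).2| := by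
    intro i s
    simp only [edot, D2mvec]
    have h1 := Real.abs_cos_le_one (U x.2.1 s + U (x.2.2 i) s)
    have h2 := Real.abs_sin_le_one (U x.2.1 s + U (x.2.2 i) s)
    calc |(x.1 i).1 * -Real.cos (U x.2.1 s + U (x.2.2 i) s)
          + (x.1 i).2 * -Real.sin (U x.2.1 s + U (x.2.2 i) s)|
        ≤ |(x.1 i).1 * -Real.cos (U x.2.1 s + U (x.2.2 i) s)|
          + |(x.1 i).2 * -Real.sin (U x.2.1 s + U (x.2.2 i) s)| := abs_add_le _ _
      _ = |(x.1 i).1| * |Real.cos (U x.2.1 s + U (x.2.2 i) s)|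
          + |(x.1 i).2| * |Real.sin (U x.2.1 s + U (x.2.2 i) s)| := by
          rw [abs_mul, abs_mul, abs_neg, abs_neg]
      _ ≤ |(x.1 i).1| * 1 + |(x.1 i).2| * 1 := by
          gcongr <;> first | assumption | positivity
      _ = |(x.1 i).1| + |(x.1 i).2| := by ring
  -- injectivity from the eigenvalue hypothesis
  have hinj : ∀ i, ∀ g : E, (∀ w : E, (inner ℝ g w : ℝ)
      = ∫ s, edot (x.1 i) (D2mvec (U x.2.1 s + U (x.2.2 i) s)) * U g s * U w s ∂mu01)
      → g = 0 := by
    intro i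
    refine hinj_of_not_eigen _ (hcont i) ?_
    exact heig i
  -- the coordinate inclusion maps
  have hsingle : ∀ (i : Fin n) (w : E),
      (ContinuousLinearMap.pi (fun j : Fin n =>
        if j = i then ContinuousLinearMap.id ℝ E else 0)) w = Pi.single i w := by
    intro i w
    funext j
    rw [ContinuousLinearMap.pi_apply]
    by_cases h : j = i <;> simp [h, Pi.single_apply]
  choose g hg using fun i : Fin n =>
    solve (fun s => edot (x.1 i) (D2mvec (U x.2.1 s + U (x.2.2 i) s))) (hcont i)
      (|(x.1 i).1| + |(x.1 i).2|) (hbound i) (hinj i)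
      (T.comp (ContinuousLinearMap.pi (fun j : Fin n =>
        if j = i then ContinuousLinearMap.id ℝ E else 0)))
  refine ⟨(fun _ => ((0:ℝ), (0:ℝ)), (0:E), g), fun u => ?_⟩
  rw [dgFormula]
  have hz1 : ∀ i : Fin n,
      -(∫ s, edot ((0:ℝ), (0:ℝ)) (Dmvec (U x.2.1 s + U (x.2.2 i) s)) * U (u i) s ∂mu01)
        = 0 := by
    intro i; simp [edot]
  calc (∑ i, (-(∫ s, edot ((fun _ => ((0:ℝ), (0:ℝ))) i) (Dmvec (U x.2.1 s + U (x.2.2 i) s))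
          * U (u i) s ∂mu01)))
        + ∑ i, ((∫ s, (g i : ℝ → ℝ) s * (u i : ℝ → ℝ) s ∂mu01)
          - ∫ s, edot (x.1 i) (D2mvec (U x.2.1 s + U (x.2.2 i) s))
              * (U (g i) s + U (0:E) s) * U (u i) s ∂mu01)
      = ∑ i, ((∫ s, (g i : ℝ → ℝ) s * (u i : ℝ → ℝ) s ∂mu01)
          - ∫ s, edot (x.1 i) (D2mvec (U x.2.1 s + U (x.2.2 i) s))
              * U (g i) s * U (u i) s ∂mu01) := by
        rw [Finset.sum_congr rfl (fun i _ => hz1 i), Finset.sum_const_zero, zero_add]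
        refine Finset.sum_congr rfl (fun i _ => ?_)
        congr 1
        refine integral_congr_ae (Filter.Eventually.of_forall (fun s => ?_))
        simp only [U_zero, add_zero]
    _ = ∑ i, T (Pi.single i (u i)) := by
        refine Finset.sum_congr rfl (fun i _ => ?_)
        have h1 := hg i (u i)
        rw [h1, ContinuousLinearMap.comp_apply, hsingle i (u i)]
    _ = T (∑ i, Pi.single i (u i)) := (map_sum T _ _).symm
    _ = T u := by rw [Finset.univ_sum_single]
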